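/- There is a constant C ≥ 1 such that if X ~ Bin(k−1, δ/k) with 0 < δ < 1/(2e^2), p ≥ 2, and ℓ ≥ 1 is real, then E[((X+1)^{p-1} − 1)^ℓ] ≤ C · δ · (ℓ(p−1)+1)^{ℓ(p−1)+1}. -/

import Mathlib

private lemma geom_le_two {r : ℝ} (h0 : 0 ≤ r) (h1 : r ≤ 1/2) (n : ℕ) :
    ∑ i ∈ Finset.range n, r ^ i ≤ 2 := by
  rw [geom_sum_eq (by intro he; rw [he] at h1; norm_num at h1 : r ≠ 1)]
  rw [div_le_iff_of_neg (by linarith : r - 1 < 0)]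
  nlinarith [pow_nonneg h0 n]

private lemma key_pow (M : ℝ) (hM : 1 ≤ M) (i : ℕ) :
    ((i : ℝ) + 2) ^ M ≤ (M + 1) ^ (M + 1) * Real.exp 2 ^ i := by
  have hx : (0:ℝ) < (i : ℝ) + 2 := by positivity
  have hM1 : (0:ℝ) < M + 1 := by linarith
  have hlogM : 0 ≤ Real.log (M + 1) := Real.log_nonneg (by linarith)
  have hi : (0:ℝ) ≤ (i : ℝ) := Nat.cast_nonneg i
  have hlog : M * Real.log ((i : ℝ) + 2) ≤
      (M + 1) * Real.log (M + 1) + (i : ℝ) * 2 := by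
    rcases le_or_gt ((i : ℝ) + 2) (M + 1) with h | h
    · have hle : Real.log ((i : ℝ) + 2) ≤ Real.log (M + 1) :=
        Real.log_le_log hx h
      nlinarith
    · set t : ℝ := ((i : ℝ) + 2) / (M + 1) with ht
      have ht1 : 1 ≤ t := (one_le_div hM1).mpr h.le
      have htm : t * (M + 1) = (i : ℝ) + 2 := div_mul_cancel₀ _ (ne_of_gt hM1)
      have hsplit : Real.log ((i : ℝ) + 2) = Real.log (M + 1) + Real.log t := by
        rw [ht, Real.log_div (by positivity) (ne_of_gt hM1)]
        ring
      have hlt : Real.log t ≤ t - 1 := Real.log_le_sub_one_of_pos (by linarith)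
      have hMt : M * Real.log t ≤ M * (t - 1) :=
        mul_le_mul_of_nonneg_left hlt (by linarith)
      have hkey : M * (t - 1) ≤ (i : ℝ) + 1 - M := by nlinarith
      nlinarith
  have h1 : ((i : ℝ) + 2) ^ M = Real.exp (M * Real.log ((i : ℝ) + 2)) := by
    rw [Real.rpow_def_of_pos hx, mul_comm]
  have h2 : (M + 1) ^ (M + 1) * Real.exp 2 ^ i
      = Real.exp ((M + 1) * Real.log (M + 1) + (i : ℝ) * 2) := by
    rw [Real.rpow_def_of_pos hM1, ← Real.exp_nat_mul, ← Real.exp_add, mul_comm (Real.log (M+1))]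
  rw [h1, h2]
  exact Real.exp_le_exp.mpr hlog

/-- Moment bound for `(X+1)^(p-1) - 1` where `X ~ Bin(k-1, δ/k)`: there is `C ≥ 1`
such that for `0 < δ < 1/(2e²)`, `p ≥ 2` and real `ℓ ≥ 1`,
`E[((X+1)^(p-1) - 1)^ℓ] ≤ C δ (ℓ(p-1)+1)^(ℓ(p-1)+1)`. -/
theorem binomial_power_moment_bound :
    ∃ C : ℝ, 1 ≤ C ∧
      ∀ (k : ℕ) (δ p ℓ : ℝ), 1 ≤ k → 0 < δ → δ < 1 / (2 * Real.exp 1 ^ 2) →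
        2 ≤ p → 1 ≤ ℓ →
        ∑ i ∈ Finset.range k,
            ((((i : ℝ) + 1) ^ (p - 1) - 1) ^ ℓ *
              (((k - 1).choose i : ℝ) * (δ / k) ^ i * (1 - δ / k) ^ (k - 1 - i))) ≤
          C * δ * (ℓ * (p - 1) + 1) ^ (ℓ * (p - 1) + 1) := by
  refine ⟨2, one_le_two, ?_⟩
  intro k δ p ℓ hk δpos hδ hp hℓ
  have hexp : (2:ℝ) ≤ Real.exp 1 := by
    have := Real.add_one_le_exp (1:ℝ); linarith
  have hδ2 : Real.exp 2 * δ ≤ 1 / 2 := by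
    have he2 : Real.exp 2 = Real.exp 1 ^ 2 := by
      rw [← Real.exp_nat_mul]; norm_num
    rw [lt_div_iff₀ (by positivity)] at hδ
    rw [he2]; nlinarith
  have hδ1 : δ < 1 := by
    have h1 : (1:ℝ) / (2 * Real.exp 1 ^ 2) ≤ 1 := by
      rw [div_le_one (by positivity)]; nlinarith
    linarith
  set M : ℝ := ℓ * (p - 1) with hMdef
  have hM : 1 ≤ M := by nlinarith
  obtain ⟨n, rfl⟩ : ∃ n, k = n + 1 := ⟨k - 1, by omega⟩
  rw [Finset.sum_range_succ']
  have hf0 : ((((0:ℕ) : ℝ) + 1) ^ (p - 1) - 1) ^ ℓ *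
      (((n + 1 - 1).choose 0 : ℝ) * (δ / (n+1 : ℕ)) ^ 0 *
        (1 - δ / (n+1 : ℕ)) ^ (n + 1 - 1 - 0)) = 0 := by
    rw [Nat.cast_zero, zero_add, Real.one_rpow, sub_self,
      Real.zero_rpow (by linarith), zero_mul]
  rw [hf0, add_zero]
  have hn1 : (0:ℝ) < (n:ℝ) + 1 := by positivity
  have hcast : ((n+1 : ℕ) : ℝ) = (n : ℝ) + 1 := by push_cast; ring
  have hδk0 : 0 ≤ 1 - δ / ((n:ℝ) + 1) := by
    have : δ / ((n:ℝ) + 1) ≤ δ := by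
      rw [div_le_iff₀ hn1]; nlinarith
    linarith
  have hδk1 : 1 - δ / ((n:ℝ) + 1) ≤ 1 := by
    have : 0 ≤ δ / ((n:ℝ) + 1) := by positivity
    linarith
  have hpoint : ∀ i ∈ Finset.range n,
      ((((i+1 : ℕ) : ℝ) + 1) ^ (p - 1) - 1) ^ ℓ *
        (((n + 1 - 1).choose (i+1) : ℝ) * (δ / (n+1 : ℕ)) ^ (i+1) *
          (1 - δ / (n+1 : ℕ)) ^ (n + 1 - 1 - (i+1))) ≤
      ((M + 1) ^ (M + 1) * δ) * (Real.exp 2 * δ) ^ i := by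
    intro i _
    have hx2 : (((i+1 : ℕ) : ℝ) + 1) = (i : ℝ) + 2 := by push_cast; ring
    rw [hx2, hcast]
    set x : ℝ := (i : ℝ) + 2 with hxdef
    have hx1 : (1:ℝ) ≤ x := by
      have := Nat.cast_nonneg (α := ℝ) i
      rw [hxdef]; linarith
    have hxp : 1 ≤ x ^ (p - 1) := by
      calc (1:ℝ) = (1:ℝ) ^ (p-1) := (Real.one_rpow _).symm
        _ ≤ x ^ (p - 1) := Real.rpow_le_rpow (by norm_num) hx1 (by linarith)
    have hA : (x ^ (p - 1) - 1) ^ ℓ ≤ x ^ M := by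
      have h1 : (x ^ (p - 1) - 1) ^ ℓ ≤ (x ^ (p - 1)) ^ ℓ :=
        Real.rpow_le_rpow (by linarith) (by linarith) (by linarith)
      have h2 : (x ^ (p - 1)) ^ ℓ = x ^ M := by
        rw [← Real.rpow_mul (by linarith), hMdef, mul_comm]
      linarith [h1, h2.le]
    have hAnn : 0 ≤ (x ^ (p - 1) - 1) ^ ℓ := Real.rpow_nonneg (by linarith) _
    have hB : ((n + 1 - 1).choose (i+1) : ℝ) * (δ / ((n:ℝ)+1)) ^ (i+1) *
        (1 - δ / ((n:ℝ)+1)) ^ (n + 1 - 1 - (i+1)) ≤ δ ^ (i+1) := by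
      have hcn : ((n + 1 - 1).choose (i+1) : ℝ) ≤ ((n:ℝ) + 1) ^ (i+1) := by
        have h1 : (n + 1 - 1).choose (i+1) ≤ (n+1) ^ (i+1) :=
          le_trans (Nat.choose_le_pow _ _)
            (Nat.pow_le_pow_left (by omega) _)
        calc ((n + 1 - 1).choose (i+1) : ℝ) ≤ (((n+1) ^ (i+1) : ℕ) : ℝ) := by
              exact_mod_cast h1
          _ = ((n:ℝ) + 1) ^ (i+1) := by push_cast; ring
      have hBnn : (0:ℝ) ≤ (δ / ((n:ℝ)+1)) ^ (i+1) := by positivity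
      have hpow1 : (1 - δ / ((n:ℝ)+1)) ^ (n + 1 - 1 - (i+1)) ≤ 1 :=
        pow_le_one₀ hδk0 hδk1
      have hpow0 : 0 ≤ (1 - δ / ((n:ℝ)+1)) ^ (n + 1 - 1 - (i+1)) :=
        pow_nonneg hδk0 _
      have hmain : ((n:ℝ) + 1) ^ (i+1) * (δ / ((n:ℝ)+1)) ^ (i+1) = δ ^ (i+1) := by
        rw [← mul_pow, mul_div_cancel₀ _ (ne_of_gt hn1)]
      calc ((n + 1 - 1).choose (i+1) : ℝ) * (δ / ((n:ℝ)+1)) ^ (i+1) *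
            (1 - δ / ((n:ℝ)+1)) ^ (n + 1 - 1 - (i+1))
          ≤ ((n + 1 - 1).choose (i+1) : ℝ) * (δ / ((n:ℝ)+1)) ^ (i+1) * 1 := by
            apply mul_le_mul_of_nonneg_left hpow1
            positivity
        _ = ((n + 1 - 1).choose (i+1) : ℝ) * (δ / ((n:ℝ)+1)) ^ (i+1) := mul_one _
        _ ≤ ((n:ℝ) + 1) ^ (i+1) * (δ / ((n:ℝ)+1)) ^ (i+1) :=
            mul_le_mul_of_nonneg_right hcn hBnn
        _ = δ ^ (i+1) := hmain
    have hBnn' : 0 ≤ ((n + 1 - 1).choose (i+1) : ℝ) * (δ / ((n:ℝ)+1)) ^ (i+1) *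
        (1 - δ / ((n:ℝ)+1)) ^ (n + 1 - 1 - (i+1)) := by positivity
    have hxM : 0 ≤ x ^ M := Real.rpow_nonneg (by linarith) _
    have step1 : (x ^ (p - 1) - 1) ^ ℓ *
        (((n + 1 - 1).choose (i+1) : ℝ) * (δ / ((n:ℝ)+1)) ^ (i+1) *
          (1 - δ / ((n:ℝ)+1)) ^ (n + 1 - 1 - (i+1))) ≤ x ^ M * δ ^ (i+1) :=
      mul_le_mul hA hB hBnn' hxM
    have step2 : x ^ M * δ ^ (i+1) ≤
        ((M + 1) ^ (M + 1) * Real.exp 2 ^ i) * δ ^ (i+1) :=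
      mul_le_mul_of_nonneg_right (key_pow M hM i) (by positivity)
    have step3 : ((M + 1) ^ (M + 1) * Real.exp 2 ^ i) * δ ^ (i+1) =
        ((M + 1) ^ (M + 1) * δ) * (Real.exp 2 * δ) ^ i := by
      rw [mul_pow, pow_succ]; ring
    calc _ ≤ x ^ M * δ ^ (i+1) := step1
      _ ≤ _ := step2.trans step3.le
  calc ∑ i ∈ Finset.range n, ((((i+1 : ℕ) : ℝ) + 1) ^ (p - 1) - 1) ^ ℓ *
        (((n + 1 - 1).choose (i+1) : ℝ) * (δ / (n+1 : ℕ)) ^ (i+1) *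
          (1 - δ / (n+1 : ℕ)) ^ (n + 1 - 1 - (i+1)))
      ≤ ∑ i ∈ Finset.range n, ((M + 1) ^ (M + 1) * δ) * (Real.exp 2 * δ) ^ i :=
        Finset.sum_le_sum hpoint
    _ = ((M + 1) ^ (M + 1) * δ) * ∑ i ∈ Finset.range n, (Real.exp 2 * δ) ^ i := by
        rw [Finset.mul_sum]
    _ ≤ ((M + 1) ^ (M + 1) * δ) * 2 := by
        apply mul_le_mul_of_nonneg_left
          (geom_le_two (by positivity) hδ2 n)
        have : (0:ℝ) ≤ (M + 1) ^ (M + 1) := Real.rpow_nonneg (by linarith) _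
        positivity
    _ = 2 * δ * (M + 1) ^ (M + 1) := by ring
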